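/- Let λ be a nonzero real number. If u ∈ H satisfies Pu − iλ·Q*(Qu) − λ²u = 0, then Pu = λ²u and Qu = 0. -/

import Mathlib

/-- Real/imaginary-part splitting in Lemma 3.6(6): if `λ ≠ 0` is real and
`Pu − iλ Q*(Qu) − λ²u = 0`, then `Pu = λ²u` and `Qu = 0`. -/
theorem pencil_kernel_split
    {H Y : Type*} [NormedAddCommGroup H] [InnerProductSpace ℂ H] [CompleteSpace H]
    [NormedAddCommGroup Y] [InnerProductSpace ℂ Y] [CompleteSpace Y]
    (P : H →L[ℂ] H) (hP : IsSelfAdjoint P)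
    (hPnn : ∀ u : H, 0 ≤ (inner ℂ (P u) u : ℂ).re)
    (Q : H →L[ℂ] Y)
    (lam : ℝ) (hlam : lam ≠ 0) (u : H)
    (hu : P u - (Complex.I * (lam : ℂ)) • (ContinuousLinearMap.adjoint Q) (Q u)
        - ((lam : ℂ) ^ 2) • u = 0) :
    P u = ((lam : ℂ) ^ 2) • u ∧ Q u = 0 := by
  have key : (inner ℂ u (P u - (Complex.I * (lam : ℂ)) • (ContinuousLinearMap.adjoint Q) (Q u)
      - ((lam : ℂ) ^ 2) • u) : ℂ) = 0 := by rw [hu]; simp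
  rw [inner_sub_right, inner_sub_right, inner_smul_right, inner_smul_right,
    ContinuousLinearMap.adjoint_inner_right] at key
  have hb : (inner ℂ (Q u) (Q u) : ℂ) = (‖Q u‖ ^ 2 : ℝ) := by
    rw [inner_self_eq_norm_sq_to_K]; norm_num
  have hc : (inner ℂ u u : ℂ) = (‖u‖ ^ 2 : ℝ) := by
    rw [inner_self_eq_norm_sq_to_K]; norm_num
  have ha : (inner ℂ u (P u) : ℂ).im = 0 := by
    have hsym := hP.isSymmetric u u
    have h2 : (starRingEnd ℂ) (inner ℂ u (P u)) = inner ℂ u (P u) := by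
      rw [inner_conj_symm]; exact hsym
    exact Complex.conj_eq_iff_im.mp h2
  rw [hb, hc] at key
  have him := congrArg Complex.im key
  simp [Complex.ext_iff, pow_two, Complex.mul_im, Complex.mul_re, ha] at him
  have hQu : Q u = 0 := him.resolve_left hlam
  refine ⟨?_, hQu⟩
  have := hu
  rw [hQu] at this
  simp at this
  linear_combination (norm := abel) this
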